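/- arXiv:1912.07042 — 3 statements merged into one kernel-verified Lean document; each statement's English description precedes it below -/
import Mathlib

section
/- Upper bounds on cutoff and covering length for lossy networks: let B = (Q, I, Σ, Δ) be a broadcast protocol and F ⊆ Q. If there exists a lossy execution of B covering F, then there exists a lossy execution ρ covering F with size |ρ| ≤ 2|Q| and length ‖ρ‖ ≤ 2|Q|². -/
/-- A broadcast protocol over finite state set `Q` and finite message alphabet `M`.
`I` is the set of initial states, `br q m q'` means `(q, !!m, q') ∈ Δ` (a broadcast
transition) and `rcv q m q'` means `(q, ??m, q') ∈ Δ` (a reception transition).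
The protocol is complete for receptions. -/
structure BroadcastProtocol (Q M : Type) [Fintype Q] [DecidableEq Q] [Fintype M] where
  I : Finset Q
  br : Q → M → Q → Prop
  rcv : Q → M → Q → Prop
  complete : ∀ q m, ∃ q', rcv q m q'

section Execs
variable {Q M : Type} [Fintype Q] [DecidableEq Q] [Fintype M]

/-- A lossy execution of length `r` over the finite node type `ν`: the communication
topology `E` is fixed throughout, and in the `i`-th step node `sender i` broadcasts
message `msg i`, which is lost (reaching no node) iff `lost i = true`. -/
structure LExec (P : BroadcastProtocol Q M) (ν : Type) [Fintype ν] [DecidableEq ν]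
    (r : ℕ) where
  lab : Fin (r + 1) → ν → Q
  E : ν → ν → Prop
  E_symm : Symmetric E
  E_irrefl : Irreflexive E
  sender : Fin r → ν
  msg : Fin r → M
  lost : Fin r → Bool
  init : ∀ v, lab 0 v ∈ P.I
  step_br : ∀ i : Fin r, P.br (lab i.castSucc (sender i)) (msg i) (lab i.succ (sender i))
  step_lost : ∀ i : Fin r, lost i = true → ∀ v, v ≠ sender i →
    lab i.succ v = lab i.castSucc v
  step_real : ∀ i : Fin r, lost i = false → ∀ v, v ≠ sender i →
    (E (sender i) v → P.rcv (lab i.castSucc v) (msg i) (lab i.succ v)) ∧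
    (¬ E (sender i) v → lab i.succ v = lab i.castSucc v)

namespace LExec

variable {P : BroadcastProtocol Q M} {ν : Type} [Fintype ν] [DecidableEq ν] {r : ℕ}

/-- Labelling of the last configuration. -/
def lastLab (ρ : LExec P ν r) : ν → Q := ρ.lab (Fin.last r)

/-- The execution covers `F` if a node of the last configuration is labelled in `F`. -/
def Covers (ρ : LExec P ν r) (F : Set Q) : Prop := ∃ v, ρ.lastLab v ∈ F

/-- The active length of node `v`: the number of broadcasts (lost or not) of `v`. -/
def activeLen (ρ : LExec P ν r) (v : ν) : ℕ :=
  (Finset.univ.filter fun i : Fin r => ρ.sender i = v).card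

/-- The real active length of node `v`: the number of non-lost broadcasts of `v`. -/
def realActiveLen (ρ : LExec P ν r) (v : ν) : ℕ :=
  (Finset.univ.filter fun i : Fin r => ρ.sender i = v ∧ ρ.lost i = false).card

end LExec

end Execs

namespace LossyProof

attribute [local instance] Classical.propDecidable

variable {Q M : Type} [Fintype Q] [DecidableEq Q] [Fintype M]

/-- One lossy step between labellings, topology `E` fixed. -/
def Step (P : BroadcastProtocol Q M) {ν : Type} (E : ν → ν → Prop) (L L' : ν → Q) : Prop :=
  ∃ (n : ν) (m : M) (lost : Bool), P.br (L n) m (L' n) ∧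
    (lost = true → ∀ v, v ≠ n → L' v = L v) ∧
    (lost = false → ∀ v, v ≠ n →
      (E n v → P.rcv (L v) m (L' v)) ∧ (¬ E n v → L' v = L v))

inductive SChain (P : BroadcastProtocol Q M) {ν : Type} (E : ν → ν → Prop) :
    (ν → Q) → (ν → Q) → ℕ → Prop
  | refl : ∀ L, SChain P E L L 0
  | snoc {L L' L'' r} : SChain P E L L' r → Step P E L' L'' → SChain P E L L'' (r + 1)

lemma SChain.trans {P : BroadcastProtocol Q M} {ν : Type} {E : ν → ν → Prop}
    {L1 L2 L3 : ν → Q} {a b : ℕ} (h1 : SChain P E L1 L2 a) (h2 : SChain P E L2 L3 b) :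
    SChain P E L1 L3 (a + b) := by
  induction h2 with
  | refl => exact h1
  | snoc hc hs ih => exact (ih).snoc hs

lemma exec_snoc {P : BroadcastProtocol Q M} {ν : Type} [Fintype ν] [DecidableEq ν] {r : ℕ}
    (ρ : LExec P ν r) {L' : ν → Q} (h : Step P ρ.E ρ.lastLab L') :
    ∃ ρ' : LExec P ν (r + 1), ρ'.lab 0 = ρ.lab 0 ∧ ρ'.lastLab = L' ∧ ρ'.E = ρ.E := by
  obtain ⟨n, m, lost, h1, h2, h3⟩ := h
  simp only [LExec.lastLab] at h1 h2 h3
  have hc0 : ∀ (g : Fin (r+1) → ν → Q) (x : ν → Q), (Fin.snoc g x : Fin (r+2) → ν → Q) 0 = g 0 := by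
    intro g x
    have := Fin.snoc_castSucc (α := fun _ => ν → Q) (x := x) (p := g) (i := 0)
    rwa [Fin.castSucc_zero] at this
  refine ⟨{ lab := Fin.snoc ρ.lab L'
            E := ρ.E
            E_symm := ρ.E_symm
            E_irrefl := ρ.E_irrefl
            sender := Fin.snoc ρ.sender n
            msg := Fin.snoc ρ.msg m
            lost := Fin.snoc ρ.lost lost
            init := ?_
            step_br := ?_
            step_lost := ?_
            step_real := ?_ }, ?_, ?_, rfl⟩
  · intro v
    rw [hc0]
    exact ρ.init v
  · intro i
    induction i using Fin.lastCases with
    | last =>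
      simp only [Fin.snoc_last, Fin.succ_last, Fin.snoc_castSucc]
      exact h1
    | cast j =>
      simp only [Fin.snoc_castSucc, Fin.succ_castSucc]
      exact ρ.step_br j
  · intro i hl v hv
    induction i using Fin.lastCases with
    | last =>
      simp only [Fin.snoc_last] at hl hv
      simp only [Fin.succ_last, Fin.snoc_last, Fin.snoc_castSucc]
      exact h2 hl v hv
    | cast j =>
      simp only [Fin.snoc_castSucc] at hl hv
      simp only [Fin.snoc_castSucc, Fin.succ_castSucc]
      exact ρ.step_lost j hl v hv
  · intro i hl v hv
    induction i using Fin.lastCases with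
    | last =>
      simp only [Fin.snoc_last] at hl hv
      simp only [Fin.succ_last, Fin.snoc_last, Fin.snoc_castSucc]
      exact h3 hl v hv
    | cast j =>
      simp only [Fin.snoc_castSucc] at hl hv
      simp only [Fin.snoc_castSucc, Fin.succ_castSucc]
      exact ρ.step_real j hl v hv
  · funext v
    exact congrFun (hc0 ρ.lab L') v
  · unfold LExec.lastLab
    funext v
    simp only [Fin.succ_last]
    exact congrFun (Fin.snoc_last _ _) v

lemma exec_of_chain {P : BroadcastProtocol Q M} {ν : Type} [Fintype ν] [DecidableEq ν]
    {E : ν → ν → Prop} (hs : Symmetric E) (hi : Irreflexive E) {L0 L : ν → Q} {r : ℕ}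
    (hc : SChain P E L0 L r) (h0 : ∀ v, L0 v ∈ P.I) :
    ∃ ρ : LExec P ν r, ρ.lastLab = L ∧ ρ.E = E := by
  induction hc with
  | refl =>
    refine ⟨{ lab := fun _ => L0
              E := E
              E_symm := hs
              E_irrefl := hi
              sender := Fin.elim0
              msg := Fin.elim0
              lost := Fin.elim0
              init := h0
              step_br := fun i => i.elim0
              step_lost := fun i => i.elim0
              step_real := fun i => i.elim0 }, rfl, rfl⟩
  | @snoc L2 L3 rr hc hst ih =>
    obtain ⟨ρ, hlast, hE⟩ := ih
    have : Step P ρ.E ρ.lastLab L3 := by rw [hlast, hE]; exact hst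
    obtain ⟨ρ', _, h2, h3⟩ := exec_snoc ρ this
    exact ⟨ρ', h2, h3.trans hE⟩

lemma exec_reindex {P : BroadcastProtocol Q M} {ν ν' : Type} [Fintype ν] [DecidableEq ν]
    [Fintype ν'] [DecidableEq ν'] (e : ν ≃ ν') {r : ℕ} (ρ : LExec P ν r) :
    ∃ ρ' : LExec P ν' r, ∀ v, ρ'.lastLab (e v) = ρ.lastLab v := by
  refine ⟨{ lab := fun i v => ρ.lab i (e.symm v)
            E := fun a b => ρ.E (e.symm a) (e.symm b)
            E_symm := fun a b hab => ρ.E_symm hab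
            E_irrefl := fun a ha => ρ.E_irrefl _ ha
            sender := fun i => e (ρ.sender i)
            msg := ρ.msg
            lost := ρ.lost
            init := fun v => ρ.init _
            step_br := ?_
            step_lost := ?_
            step_real := ?_ }, ?_⟩
  · intro i
    simp only [Equiv.symm_apply_apply]
    exact ρ.step_br i
  · intro i hl v hv
    refine ρ.step_lost i hl (e.symm v) ?_
    intro hcon
    exact hv (by rw [← hcon, Equiv.apply_symm_apply])
  · intro i hl v hv
    have hv' : e.symm v ≠ ρ.sender i := by
      intro hcon
      exact hv (by rw [← hcon, Equiv.apply_symm_apply])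
    have := ρ.step_real i hl (e.symm v) hv'
    simpa only [Equiv.symm_apply_apply] using this
  · intro v
    simp only [LExec.lastLab, Equiv.symm_apply_apply]

variable (P : BroadcastProtocol Q M)

/-- The saturation sets: states coverable using `n` levels of rules. -/
def SatS : ℕ → Set Q
  | 0 => {q | q ∈ P.I}
  | n + 1 => SatS n ∪ {q' | ∃ a ∈ SatS n, ∃ m : M,
      P.br a m q' ∨ ((∃ p ∈ SatS n, ∃ p', P.br p m p') ∧ P.rcv a m q')}

lemma SatS_mono : ∀ {a b : ℕ}, a ≤ b → SatS P a ⊆ SatS P b := by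
  intro a b hab
  induction b with
  | zero => simp_all
  | succ b ih =>
    rcases Nat.lt_or_ge a (b+1) with h | h
    · intro q hq
      exact Or.inl (ih (by omega) hq)
    · have : a = b + 1 := by omega
      subst this
      exact le_refl _

/-- Derivable states. -/
def Der (q : Q) : Prop := ∃ n, q ∈ SatS P n

noncomputable def stage (q : Q) : ℕ := if h : Der P q then Nat.find h else 0

lemma stage_spec {q : Q} (h : Der P q) : q ∈ SatS P (stage P q) := by
  rw [stage, dif_pos h]
  exact Nat.find_spec h

lemma stage_le {q : Q} {n : ℕ} (hn : q ∈ SatS P n) : stage P q ≤ n := by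
  rw [stage, dif_pos ⟨n, hn⟩]
  exact Nat.find_min' _ hn

lemma der_of_mem {q : Q} {n : ℕ} (hn : q ∈ SatS P n) : Der P q := ⟨n, hn⟩

lemma stage_zero_init {q : Q} (h : Der P q) (h0 : stage P q = 0) : q ∈ P.I := by
  have := stage_spec P h
  rw [h0] at this
  exact this

lemma stage_pos_rule {q : Q} (h : Der P q) (h1 : 1 ≤ stage P q) :
    ∃ a ∈ SatS P (stage P q - 1), ∃ m : M,
      P.br a m q ∨ ((∃ p ∈ SatS P (stage P q - 1), ∃ p', P.br p m p') ∧ P.rcv a m q) := by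
  have hq : q ∈ SatS P (stage P q) := stage_spec P h
  have he : stage P q = (stage P q - 1) + 1 := (Nat.succ_pred_eq_of_pos h1).symm
  rw [he] at hq
  rcases hq with h' | h'
  · have := stage_le P h'
    omega
  · exact h'

/-- Node index type: derivable states of positive stage (one broadcaster node each). -/
def T : Type := {q : Q // Der P q ∧ 1 ≤ stage P q}

noncomputable instance : Fintype (T P) := Subtype.fintype _
noncomputable instance : DecidableEq (T P) := Subtype.instDecidableEq

noncomputable def rpar (t : T P) : Q := (stage_pos_rule P t.2.1 t.2.2).choose

noncomputable def rmsg (t : T P) : M :=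
  (stage_pos_rule P t.2.1 t.2.2).choose_spec.2.choose

lemma rpar_mem (t : T P) : rpar P t ∈ SatS P (stage P t.1 - 1) :=
  (stage_pos_rule P t.2.1 t.2.2).choose_spec.1

lemma rule_spec (t : T P) :
    P.br (rpar P t) (rmsg P t) t.1 ∨
      ((∃ p ∈ SatS P (stage P t.1 - 1), ∃ p', P.br p (rmsg P t) p') ∧
        P.rcv (rpar P t) (rmsg P t) t.1) :=
  (stage_pos_rule P t.2.1 t.2.2).choose_spec.2.choose_spec

lemma rpar_stage_lt (t : T P) : stage P (rpar P t) < stage P t.1 := by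
  have := stage_le P (rpar_mem P t)
  have := t.2.2
  omega

lemma rpar_der (t : T P) : Der P (rpar P t) := der_of_mem P (rpar_mem P t)

/-- `t` was derived by a reception rule. -/
def isR (t : T P) : Prop := ¬ P.br (rpar P t) (rmsg P t) t.1

lemma isR_spec (t : T P) (h : isR P t) :
    (∃ p ∈ SatS P (stage P t.1 - 1), ∃ p', P.br p (rmsg P t) p') ∧
      P.rcv (rpar P t) (rmsg P t) t.1 :=
  (rule_spec P t).resolve_left h

lemma not_isR_spec (t : T P) (h : ¬ isR P t) : P.br (rpar P t) (rmsg P t) t.1 :=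
  not_not.1 h

/-- broadcaster source state for a reception rule (junk `rpar` otherwise). -/
noncomputable def bst (t : T P) : Q :=
  if h : isR P t then (isR_spec P t h).1.choose else rpar P t

noncomputable def bst' (t : T P) : Q :=
  if h : isR P t then (isR_spec P t h).1.choose_spec.2.choose else t.1

lemma bst_mem (t : T P) (h : isR P t) : bst P t ∈ SatS P (stage P t.1 - 1) := by
  rw [bst, dif_pos h]
  exact (isR_spec P t h).1.choose_spec.1

lemma bst_br (t : T P) (h : isR P t) : P.br (bst P t) (rmsg P t) (bst' P t) := by
  rw [bst, dif_pos h, bst', dif_pos h]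
  exact (isR_spec P t h).1.choose_spec.2.choose_spec

lemma bst_stage_lt (t : T P) : stage P (bst P t) < stage P t.1 := by
  by_cases h : isR P t
  · have := stage_le P (bst_mem P t h)
    have := t.2.2
    omega
  · rw [bst, dif_neg h]
    exact rpar_stage_lt P t

lemma bst_der (t : T P) : Der P (bst P t) := by
  by_cases h : isR P t
  · exact der_of_mem P (bst_mem P t h)
  · rw [bst, dif_neg h]
    exact rpar_der P t

/-- `x` lies on the derivation chain of `q`. -/
noncomputable def chainMem (x q : Q) : Prop :=
  x = q ∨ ∃ h : Der P q ∧ 1 ≤ stage P q, chainMem x (rpar P ⟨q, h⟩)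
termination_by stage P q
decreasing_by exact rpar_stage_lt P ⟨q, h⟩

/-- Position on the derivation chain of `q`: first element in `W` or of stage 0. -/
noncomputable def walkU (W : Finset Q) (q : Q) : Q :=
  if h : (Der P q ∧ 1 ≤ stage P q) ∧ q ∉ W then walkU W (rpar P ⟨q, h.1⟩) else q
termination_by stage P q
decreasing_by exact rpar_stage_lt P ⟨q, h.1⟩

lemma chainMem_self (q : Q) : chainMem P q q := by
  rw [chainMem]
  exact Or.inl rfl

lemma chainMem_step {x : Q} {q : Q} (h : Der P q ∧ 1 ≤ stage P q)
    (hx : chainMem P x (rpar P ⟨q, h⟩)) : chainMem P x q := by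
  rw [chainMem]
  exact Or.inr ⟨h, hx⟩

lemma chainMem_stage_le {x q : Q} (h : chainMem P x q) : stage P x ≤ stage P q := by
  suffices H : ∀ n q, stage P q = n → chainMem P x q → stage P x ≤ stage P q from
    H _ q rfl h
  intro n
  induction n using Nat.strong_induction_on with
  | _ n ih =>
    intro q hn hq
    rw [chainMem] at hq
    rcases hq with rfl | ⟨hc, hrec⟩
    · exact le_refl _
    · have hlt : stage P (rpar P ⟨q, hc⟩) < stage P q := rpar_stage_lt P ⟨q, hc⟩
      exact le_trans (ih _ (by omega) _ rfl hrec) (le_of_lt hlt)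

lemma walkU_stop {W : Finset Q} {q : Q} (h : q ∈ W ∨ ¬(Der P q ∧ 1 ≤ stage P q)) :
    walkU P W q = q := by
  rw [walkU, dif_neg]
  tauto

lemma walkU_sound {W : Finset Q} {q : Q} (h : Der P q) :
    Der P (walkU P W q) ∧ (walkU P W q ∈ W ∨ stage P (walkU P W q) = 0) := by
  suffices H : ∀ n q, stage P q = n → Der P q →
      Der P (walkU P W q) ∧ (walkU P W q ∈ W ∨ stage P (walkU P W q) = 0) from
    H _ q rfl h
  intro n
  induction n using Nat.strong_induction_on with
  | _ n ih =>
    intro q hn hq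
    rw [walkU]
    by_cases hc : (Der P q ∧ 1 ≤ stage P q) ∧ q ∉ W
    · rw [dif_pos hc]
      have hlt : stage P (rpar P ⟨q, hc.1⟩) < stage P q := rpar_stage_lt P ⟨q, hc.1⟩
      exact ih _ (by omega) _ rfl (rpar_der P ⟨q, hc.1⟩)
    · rw [dif_neg hc]
      refine ⟨hq, ?_⟩
      by_cases hw : q ∈ W
      · exact Or.inl hw
      · right
        have hnd : ¬ (Der P q ∧ 1 ≤ stage P q) := fun hd => hc ⟨hd, hw⟩
        rcases Nat.eq_zero_or_pos (stage P q) with h0 | h0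
        · exact h0
        · exact absurd ⟨hq, h0⟩ hnd

lemma walkU_eq_of_chain {W : Finset Q} {p q : Q} (h : chainMem P p q)
    (habove : ∀ y, chainMem P y q → stage P p < stage P y → y ∉ W) :
    walkU P W q = walkU P W p := by
  suffices H : ∀ n q, stage P q = n → chainMem P p q →
      (∀ y, chainMem P y q → stage P p < stage P y → y ∉ W) →
      walkU P W q = walkU P W p from H _ q rfl h habove
  intro n
  induction n using Nat.strong_induction_on with
  | _ n ih =>
    intro q hn hq hab
    rw [chainMem] at hq
    rcases hq with rfl | ⟨hc, hrec⟩
    · rfl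
    · have hlt : stage P (rpar P ⟨q, hc⟩) < stage P q := rpar_stage_lt P ⟨q, hc⟩
      have hps : stage P p ≤ stage P (rpar P ⟨q, hc⟩) := chainMem_stage_le P hrec
      have hqW : q ∉ W := hab q (chainMem_self P q) (by omega)
      rw [walkU, dif_pos ⟨hc, hqW⟩]
      exact ih _ (by omega) _ rfl hrec
        (fun y hy hs => hab y (chainMem_step P hc hy) hs)

lemma walkU_insert_not_chain {W : Finset Q} {p q : Q} (h : ¬ chainMem P p q) :
    walkU P (insert p W) q = walkU P W q := by
  suffices H : ∀ n q, stage P q = n → ¬ chainMem P p q →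
      walkU P (insert p W) q = walkU P W q from H _ q rfl h
  intro n
  induction n using Nat.strong_induction_on with
  | _ n ih =>
    intro q hn hq
    have hne : q ≠ p := fun hc => hq (hc ▸ chainMem_self P p)
    rw [walkU]
    conv_rhs => rw [walkU]
    by_cases hc : (Der P q ∧ 1 ≤ stage P q) ∧ q ∉ W
    · have hc' : (Der P q ∧ 1 ≤ stage P q) ∧ q ∉ insert p W := by
        refine ⟨hc.1, ?_⟩
        simp only [Finset.mem_insert]
        tauto
      rw [dif_pos hc, dif_pos hc']
      have hlt : stage P (rpar P ⟨q, hc.1⟩) < stage P q := rpar_stage_lt P ⟨q, hc.1⟩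
      exact ih _ (by omega) _ rfl (fun hcon => hq (chainMem_step P hc.1 hcon))
    · have hc' : ¬ ((Der P q ∧ 1 ≤ stage P q) ∧ q ∉ insert p W) := by
        intro hcon
        refine hc ⟨hcon.1, fun hw => ?_⟩
        exact hcon.2 (Finset.mem_insert_of_mem hw)
      rw [dif_neg hc, dif_neg hc']

/-- Target state of each node: `none` is the covering witness, `some t` the broadcaster. -/
noncomputable def tau (f : Q) : Option (T P) → Q
  | none => f
  | some t => bst P t

def serves (f : Q) : Option (T P) → Option (T P) → Prop
  | some t, v => isR P t ∧ chainMem P t.1 (tau P f v)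
  | none, _ => False

def EE (f : Q) (a b : Option (T P)) : Prop :=
  a ≠ b ∧ (serves P f a b ∨ serves P f b a)

def unfired (U : Finset Q) (v : Option (T P)) : Prop :=
  ∀ t : T P, v = some t → isR P t → t.1 ∉ U

lemma tau_der {f : Q} (hf : Der P f) (v : Option (T P)) : Der P (tau P f v) := by
  cases v with
  | none => exact hf
  | some t => exact bst_der P t

lemma client_unfired {f : Q} {U : Finset Q} {p : T P}
    (hU2 : ∀ x ∈ U, stage P x ≤ stage P p.1)
    {v : Option (T P)} (hcl : chainMem P p.1 (tau P f v)) : unfired P U v := by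
  intro t hv _hisR
  subst hv
  intro hmem
  have h1 : stage P p.1 ≤ stage P (bst P t) := chainMem_stage_le P hcl
  have h2 : stage P (bst P t) < stage P t.1 := bst_stage_lt P t
  have h3 := hU2 t.1 hmem
  omega

lemma client_pos {f : Q} {U : Finset Q} {p : T P} (hpU : p.1 ∉ U)
    (hU1 : ∀ x : T P, stage P x.1 < stage P p.1 → x.1 ∈ U)
    (hU2 : ∀ x ∈ U, stage P x ≤ stage P p.1)
    {v : Option (T P)} (hcl : chainMem P p.1 (tau P f v)) :
    walkU P U (tau P f v) = rpar P p := by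
  have h1 : walkU P U (tau P f v) = walkU P U p.1 := by
    refine walkU_eq_of_chain P hcl ?_
    intro y _hy hs hyU
    have := hU2 y hyU
    omega
  rw [h1, walkU, dif_pos ⟨p.2, hpU⟩]
  refine walkU_stop P ?_
  by_cases hs : 1 ≤ stage P (rpar P p)
  · left
    exact hU1 ⟨rpar P p, rpar_der P p, hs⟩ (rpar_stage_lt P p)
  · right
    tauto

lemma bcaster_pos {U : Finset Q} {p : T P}
    (hU1 : ∀ x : T P, stage P x.1 < stage P p.1 → x.1 ∈ U) :
    walkU P U (bst P p) = bst P p := by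
  refine walkU_stop P ?_
  by_cases hs : 1 ≤ stage P (bst P p)
  · left
    exact hU1 ⟨bst P p, bst_der P p, hs⟩ (bst_stage_lt P p)
  · right
    tauto

lemma restore {f : Q} {U : Finset Q} {p : T P}
    (hU2 : ∀ x ∈ U, stage P x ≤ stage P p.1)
    {L L' : Option (T P) → Q}
    (hL : ∀ v, unfired P U v → L v = walkU P U (tau P f v))
    (hcl : ∀ v, chainMem P p.1 (tau P f v) → L' v = p.1)
    (hnc : ∀ v, ¬ chainMem P p.1 (tau P f v) → unfired P (insert p.1 U) v → L' v = L v) :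
    ∀ v, unfired P (insert p.1 U) v → L' v = walkU P (insert p.1 U) (tau P f v) := by
  intro v hunf
  by_cases hc : chainMem P p.1 (tau P f v)
  · rw [hcl v hc]
    have h1 : walkU P (insert p.1 U) (tau P f v) = walkU P (insert p.1 U) p.1 := by
      refine walkU_eq_of_chain P hc ?_
      intro y _hy hs hyU
      rcases Finset.mem_insert.1 hyU with rfl | hyU
      · omega
      · have := hU2 y hyU
        omega
    rw [h1, walkU_stop P (Or.inl (Finset.mem_insert_self _ _))]
  · have hunfU : unfired P U v := by
      intro t hv hisR
      intro hmem
      exact hunf t hv hisR (Finset.mem_insert_of_mem hmem)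
    rw [hnc v hc hunf, hL v hunfU, walkU_insert_not_chain P hc]

lemma round_lemma {f : Q} {U : Finset Q} {p : T P} (hpU : p.1 ∉ U)
    (hU1 : ∀ x : T P, stage P x.1 < stage P p.1 → x.1 ∈ U)
    (hU2 : ∀ x ∈ U, stage P x ≤ stage P p.1)
    {L : Option (T P) → Q}
    (hL : ∀ v, unfired P U v → L v = walkU P U (tau P f v)) :
    ∃ L' s, SChain P (EE P f) L L' s ∧ s ≤ Fintype.card (Option (T P)) ∧
      ∀ v, unfired P (insert p.1 U) v → L' v = walkU P (insert p.1 U) (tau P f v) := by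
  have hself : ¬ chainMem P p.1 (tau P f (some p)) := by
    intro hc
    have h1 : stage P p.1 ≤ stage P (bst P p) := chainMem_stage_le P hc
    have h2 : stage P (bst P p) < stage P p.1 := bst_stage_lt P p
    omega
  by_cases hR : isR P p
  · -- reception round: the broadcaster `some p` really broadcasts
    set L' : Option (T P) → Q := fun v =>
      if v = some p then bst' P p
      else if chainMem P p.1 (tau P f v) then p.1
      else if serves P f v (some p) then (P.complete (L v) (rmsg P p)).choose
      else L v with hL'
    have hLp : L (some p) = bst P p := by
      rw [hL (some p) (fun t ht _ => by cases ht; exact hpU)]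
      show walkU P U (bst P p) = bst P p
      exact bcaster_pos P hU1
    have hstep : Step P (EE P f) L L' := by
      refine ⟨some p, rmsg P p, false, ?_, ?_, ?_⟩
      · rw [hLp]
        simp only [hL', if_pos rfl]
        exact bst_br P p hR
      · intro hcon
        simp at hcon
      · intro _ v hv
        constructor
        · rintro ⟨-, hsv | hsv⟩
          · obtain ⟨-, hcm⟩ := hsv
            have hLv : L v = rpar P p := by
              rw [hL v (client_unfired P hU2 hcm), client_pos P hpU hU1 hU2 hcm]
            rw [hLv]
            simp only [hL', if_neg hv, if_pos hcm]
            exact (isR_spec P p hR).2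
          · by_cases hcm : chainMem P p.1 (tau P f v)
            · have hLv : L v = rpar P p := by
                rw [hL v (client_unfired P hU2 hcm), client_pos P hpU hU1 hU2 hcm]
              rw [hLv]
              simp only [hL', if_neg hv, if_pos hcm]
              exact (isR_spec P p hR).2
            · simp only [hL', if_neg hv, if_neg hcm, if_pos hsv]
              exact (P.complete (L v) (rmsg P p)).choose_spec
        · intro hnE
          have h1 : ¬ serves P f (some p) v := fun hs => hnE ⟨Ne.symm hv, Or.inl hs⟩
          have h2 : ¬ serves P f v (some p) := fun hs => hnE ⟨Ne.symm hv, Or.inr hs⟩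
          have hcm : ¬ chainMem P p.1 (tau P f v) := fun hc => h1 ⟨hR, hc⟩
          simp only [hL', if_neg hv, if_neg hcm, if_neg h2]
    refine ⟨L', 1, (SChain.refl L).snoc hstep, ?_, ?_⟩
    · have : 0 < Fintype.card (Option (T P)) := Fintype.card_pos
      omega
    · refine restore P hU2 hL ?_ ?_
      · intro v hc
        have hv : v ≠ some p := fun hcon => hself (hcon ▸ hc)
        simp only [hL', if_neg hv, if_pos hc]
      · intro v hcm hunf
        have hv : v ≠ some p := by
          rintro rfl
          exact hunf p rfl hR (Finset.mem_insert_self _ _)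
        have h2 : ¬ serves P f v (some p) := by
          cases v with
          | none => exact fun hs => hs
          | some t =>
            rintro ⟨hRt, hct⟩
            have h1 : stage P t.1 ≤ stage P (bst P p) := chainMem_stage_le P hct
            have h2 : stage P (bst P p) < stage P p.1 := bst_stage_lt P p
            have h3 : t.1 ∈ U := hU1 t (by omega)
            exact hunf t rfl hRt (Finset.mem_insert_of_mem h3)
        simp only [hL', if_neg hv, if_neg hcm, if_neg h2]
  · -- broadcast round: every client does its own lost broadcast
    have hbr : P.br (rpar P p) (rmsg P p) p.1 := not_isR_spec P p hR
    set C : Finset (Option (T P)) :=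
      Finset.univ.filter (fun v => chainMem P p.1 (tau P f v)) with hC
    have inner : ∀ G : Finset (Option (T P)), G ⊆ C →
        ∃ L', SChain P (EE P f) L L' G.card ∧ (∀ v ∈ G, L' v = p.1) ∧
          (∀ v ∉ G, L' v = L v) := by
      intro G
      induction G using Finset.cons_induction with
      | empty => exact fun _ => ⟨L, by simpa using SChain.refl L, by simp, fun v _ => rfl⟩
      | cons a G' ha ih =>
        intro hsub
        rw [Finset.cons_subset] at hsub
        obtain ⟨L', hch, hin, hout⟩ := ih hsub.2
        have hacl : chainMem P p.1 (tau P f a) := by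
          have := hsub.1
          rw [hC, Finset.mem_filter] at this
          exact this.2
        have hLa : L' a = rpar P p := by
          rw [hout a ha, hL a (client_unfired P hU2 hacl), client_pos P hpU hU1 hU2 hacl]
        have hstep : Step P (EE P f) L' (Function.update L' a p.1) := by
          refine ⟨a, rmsg P p, true, ?_, ?_, ?_⟩
          · rw [Function.update_self, hLa]
            exact hbr
          · intro _ v hv
            rw [Function.update_of_ne hv]
          · intro hcon
            simp at hcon
        refine ⟨Function.update L' a p.1, ?_, ?_, ?_⟩
        · rw [Finset.card_cons]
          exact hch.snoc hstep
        · intro v hv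
          rcases Finset.mem_cons.1 hv with rfl | hv'
          · rw [Function.update_self]
          · have hne : v ≠ a := by
              rintro rfl
              exact ha hv'
            rw [Function.update_of_ne hne]
            exact hin v hv'
        · intro v hv
          rw [Finset.mem_cons, not_or] at hv
          rw [Function.update_of_ne hv.1]
          exact hout v hv.2
    obtain ⟨L', hch, hin, hout⟩ := inner C (le_refl C)
    refine ⟨L', C.card, hch, Finset.card_le_univ C, ?_⟩
    refine restore P hU2 hL ?_ ?_
    · intro v hc
      exact hin v (by rw [hC, Finset.mem_filter]; exact ⟨Finset.mem_univ v, hc⟩)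
    · intro v hcm _
      refine hout v ?_
      rw [hC, Finset.mem_filter]
      tauto

/-- all derivable states of positive stage, as a finset. -/
noncomputable def TF : Finset Q := Finset.univ.filter (fun q => Der P q ∧ 1 ≤ stage P q)

lemma EE_symm (f : Q) : Symmetric (EE P f) := by
  rintro a b ⟨hne, h⟩
  exact ⟨Ne.symm hne, h.symm⟩

lemma EE_irrefl (f : Q) : Irreflexive (EE P f) := by
  rintro a ⟨hne, -⟩
  exact hne rfl

lemma build {f : Q} : ∀ (n : ℕ) (U : Finset Q),
    ((TF P) \ U).card ≤ n →
    (∀ x ∈ U, Der P x ∧ 1 ≤ stage P x) →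
    (∀ x ∈ U, ∀ y : T P, y.1 ∉ U → stage P x ≤ stage P y.1) →
    ∀ L : Option (T P) → Q, (∀ v, unfired P U v → L v = walkU P U (tau P f v)) →
    ∃ L' s, SChain P (EE P f) L L' s ∧
      s ≤ Fintype.card (Option (T P)) * ((TF P) \ U).card ∧
      ∀ v, unfired P (TF P) v → L' v = walkU P (TF P) (tau P f v) := by
  have hdone : ∀ (U : Finset Q), (TF P \ U) = ∅ →
      (∀ x ∈ U, Der P x ∧ 1 ≤ stage P x) →
      ∀ L : Option (T P) → Q, (∀ v, unfired P U v → L v = walkU P U (tau P f v)) →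
      ∃ L' s, SChain P (EE P f) L L' s ∧
        s ≤ Fintype.card (Option (T P)) * ((TF P) \ U).card ∧
        ∀ v, unfired P (TF P) v → L' v = walkU P (TF P) (tau P f v) := by
    intro U hempty hsub L hL
    have hUT : U = TF P := by
      apply Finset.Subset.antisymm
      · intro x hx
        rw [TF, Finset.mem_filter]
        exact ⟨Finset.mem_univ x, hsub x hx⟩
      · intro x hx
        by_contra hxU
        have : x ∈ TF P \ U := Finset.mem_sdiff.2 ⟨hx, hxU⟩
        rw [hempty] at this
        exact absurd this (Finset.notMem_empty x)
    refine ⟨L, 0, SChain.refl L, by simp, ?_⟩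
    intro v hv
    rw [← hUT] at hv ⊢
    exact hL v hv
  intro n
  induction n with
  | zero =>
    intro U hcard hsub hord L hL
    exact hdone U (Finset.card_eq_zero.1 (Nat.le_antisymm hcard (Nat.zero_le _))) hsub L hL
  | succ n ih =>
    intro U hcard hsub hord L hL
    by_cases hne : (TF P \ U).Nonempty
    · obtain ⟨p0, hp0mem, hp0min⟩ := Finset.exists_min_image (TF P \ U) (stage P) hne
      obtain ⟨hp0TF, hp0U⟩ := Finset.mem_sdiff.1 hp0mem
      have hp0cond : Der P p0 ∧ 1 ≤ stage P p0 := (Finset.mem_filter.1 hp0TF).2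
      set p : T P := ⟨p0, hp0cond⟩ with hp
      have hU1 : ∀ x : T P, stage P x.1 < stage P p.1 → x.1 ∈ U := by
        intro x hx
        by_contra hxU
        have hmem : x.1 ∈ TF P \ U := by
          refine Finset.mem_sdiff.2 ⟨?_, hxU⟩
          rw [TF, Finset.mem_filter]
          exact ⟨Finset.mem_univ _, x.2⟩
        have := hp0min _ hmem
        simp only [hp] at hx
        omega
      have hU2 : ∀ x ∈ U, stage P x ≤ stage P p.1 := fun x hx => hord x hx p hp0U
      obtain ⟨L1, s1, hch1, hs1, hL1⟩ := round_lemma P hp0U hU1 hU2 hL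
      have hsub' : ∀ x ∈ insert p0 U, Der P x ∧ 1 ≤ stage P x := by
        intro x hx
        rcases Finset.mem_insert.1 hx with rfl | hx
        · exact hp0cond
        · exact hsub x hx
      have hord' : ∀ x ∈ insert p0 U, ∀ y : T P, y.1 ∉ insert p0 U →
          stage P x ≤ stage P y.1 := by
        intro x hx y hy
        have hyU : y.1 ∉ U := fun hc => hy (Finset.mem_insert_of_mem hc)
        rcases Finset.mem_insert.1 hx with rfl | hx
        · refine hp0min _ (Finset.mem_sdiff.2 ⟨?_, hyU⟩)
          rw [TF, Finset.mem_filter]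
          exact ⟨Finset.mem_univ _, y.2⟩
        · exact hord x hx y hyU
      have herase : TF P \ insert p0 U = (TF P \ U).erase p0 := by
        ext a
        simp only [Finset.mem_sdiff, Finset.mem_insert, Finset.mem_erase, not_or]
        tauto
      have hc1 : 1 ≤ (TF P \ U).card := Finset.card_pos.2 hne
      have hcard' : (TF P \ insert p0 U).card ≤ n := by
        rw [herase, Finset.card_erase_of_mem hp0mem]
        omega
      obtain ⟨L', s2, hch2, hs2, hfin⟩ := ih (insert p0 U) hcard' hsub' hord' L1 hL1
      refine ⟨L', s1 + s2, hch1.trans hch2, ?_, hfin⟩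
      rw [herase, Finset.card_erase_of_mem hp0mem] at hs2
      have hmul : Fintype.card (Option (T P)) * (TF P \ U).card =
          Fintype.card (Option (T P)) * ((TF P \ U).card - 1) +
            Fintype.card (Option (T P)) := by
        conv_lhs => rw [show (TF P \ U).card = ((TF P \ U).card - 1) + 1 by omega]
        rw [Nat.mul_succ]
      omega
    · rw [Finset.not_nonempty_iff_eq_empty] at hne
      exact hdone U hne hsub L hL

lemma sound {ν : Type} [Fintype ν] [DecidableEq ν] {r : ℕ} (ρ : LExec P ν r) :
    ∀ (i : Fin (r + 1)) (v : ν), Der P (ρ.lab i v) := by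
  suffices H : ∀ (j : ℕ) (hj : j < r + 1) (v : ν), Der P (ρ.lab ⟨j, hj⟩ v) by
    intro i v
    have := H i.1 i.2 v
    simpa using this
  intro j
  induction j with
  | zero =>
    intro hj v
    exact ⟨0, ρ.init v⟩
  | succ j ihj =>
    intro hj v
    have hjr : j < r := by omega
    set i : Fin r := ⟨j, hjr⟩ with hi
    have hprev : ∀ v, Der P (ρ.lab i.castSucc v) := fun v => ihj (by omega) v
    choose g hg using hprev
    set N := Finset.univ.sup g with hNdef
    have hN : ∀ v, ρ.lab i.castSucc v ∈ SatS P N := fun v =>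
      SatS_mono P (Finset.le_sup (Finset.mem_univ v)) (hg v)
    have hgoal : (⟨j + 1, hj⟩ : Fin (r + 1)) = i.succ := rfl
    rw [hgoal]
    have hsend : Der P (ρ.lab i.succ (ρ.sender i)) := by
      refine ⟨N + 1, Or.inr ?_⟩
      exact ⟨ρ.lab i.castSucc (ρ.sender i), hN _, ρ.msg i, Or.inl (ρ.step_br i)⟩
    by_cases hv : v = ρ.sender i
    · rw [hv]
      exact hsend
    · cases hlost : ρ.lost i with
      | true =>
        rw [ρ.step_lost i hlost v hv]
        exact ⟨N, hN v⟩
      | false =>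
        obtain ⟨hE1, hE2⟩ := ρ.step_real i hlost v hv
        by_cases hE : ρ.E (ρ.sender i) v
        · refine ⟨N + 1, Or.inr ?_⟩
          refine ⟨ρ.lab i.castSucc v, hN v, ρ.msg i, Or.inr ⟨?_, hE1 hE⟩⟩
          exact ⟨ρ.lab i.castSucc (ρ.sender i), hN _, ρ.lab i.succ (ρ.sender i), ρ.step_br i⟩
        · rw [hE2 hE]
          exact ⟨N, hN v⟩

end LossyProof

open LossyProof in
/-- **Upper bounds on cutoff and covering length for lossy networks.**
If some lossy execution of `P` covers `F`, then there is a lossy execution covering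
`F` with at most `2|Q|` nodes and length at most `2|Q|²`. -/
theorem upper_bounds_lossy
    {Q M : Type} [Fintype Q] [DecidableEq Q] [Fintype M] (P : BroadcastProtocol Q M)
    (F : Set Q) (ν : Type) [Fintype ν] [DecidableEq ν]
    (r₀ : ℕ) (ρ₀ : LExec P ν r₀) (h : ρ₀.Covers F) :
    ∃ (k r : ℕ) (ρ : LExec P (Fin k) r), ρ.Covers F ∧
      k ≤ 2 * Fintype.card Q ∧ r ≤ 2 * Fintype.card Q ^ 2 := by
  classical
  obtain ⟨v0, hv0⟩ := h
  set f := ρ₀.lastLab v0 with hfdef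
  have hDf : Der P f := sound P ρ₀ (Fin.last r₀) v0
  set L0 : Option (T P) → Q := fun v => walkU P ∅ (tau P f v) with hL0def
  have hinit : ∀ v, L0 v ∈ P.I := by
    intro v
    have hd := tau_der P hDf v
    obtain ⟨hder, hor⟩ := walkU_sound P (W := ∅) hd
    rcases hor with hmem | h0
    · exact absurd hmem (Finset.notMem_empty _)
    · exact stage_zero_init P hder h0
  obtain ⟨L', s, hch, hs, hfin⟩ :=
    build P (f := f) ((TF P \ ∅).card) ∅ le_rfl (by simp) (by simp) L0 (fun v _ => rfl)
  have hnone : L' none = f := by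
    have hu : unfired P (TF P) none := by
      intro t ht
      exact absurd ht (by simp)
    rw [hfin none hu]
    show walkU P (TF P) f = f
    refine walkU_stop P ?_
    by_cases h1 : 1 ≤ stage P f
    · left
      rw [TF, Finset.mem_filter]
      exact ⟨Finset.mem_univ _, hDf, h1⟩
    · right
      tauto
  obtain ⟨ρ1, hlast, hE⟩ := exec_of_chain (EE_symm P f) (EE_irrefl P f) hch hinit
  obtain ⟨ρ2, hre⟩ := exec_reindex (Fintype.equivFin (Option (T P))) ρ1
  have h1 : Fintype.card (T P) ≤ Fintype.card Q := Fintype.card_subtype_le _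
  have h2 : 1 ≤ Fintype.card Q := Fintype.card_pos_iff.2 ⟨f⟩
  have hk : Fintype.card (Option (T P)) = Fintype.card (T P) + 1 := Fintype.card_option
  refine ⟨Fintype.card (Option (T P)), s, ρ2, ⟨Fintype.equivFin (Option (T P)) none, ?_⟩, ?_, ?_⟩
  · rw [hre none, hlast, hnone]
    exact hv0
  · omega
  · have hTF : (TF P \ ∅).card ≤ Fintype.card Q := by
      rw [Finset.sdiff_empty]
      exact le_trans (Finset.card_le_univ _) (le_of_eq Finset.card_univ)
    have hs2 : s ≤ (Fintype.card Q + 1) * Fintype.card Q :=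
      le_trans hs (Nat.mul_le_mul (by omega) hTF)
    have : (Fintype.card Q + 1) * Fintype.card Q ≤ 2 * Fintype.card Q ^ 2 := by
      nlinarith [h2]
    omega
end

section
/- The reconfigurable and lossy semantics cover the same states: for every broadcast protocol B = (Q, I, Σ, Δ) and every F ⊆ Q, there exists a reconfigurable execution of B covering F if and only if there exists a lossy execution of B covering F. -/
section Execs
variable {Q M : Type} [Fintype Q] [DecidableEq Q] [Fintype M]

/-- A reconfigurable execution of length `r` over the finite node type `ν`:
`lab i v` is the state of node `v` in the `i`-th configuration, `edges i` is the
(symmetric, irreflexive) communication topology of the `i`-th configuration,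
and in the `i`-th step node `sender i` broadcasts message `msg i` to its
neighbours; the topology may change arbitrarily at each step. -/
structure RExec (P : BroadcastProtocol Q M) (ν : Type) [Fintype ν] [DecidableEq ν]
    (r : ℕ) where
  lab : Fin (r + 1) → ν → Q
  edges : Fin (r + 1) → ν → ν → Prop
  edges_symm : ∀ i, Symmetric (edges i)
  edges_irrefl : ∀ i, Irreflexive (edges i)
  sender : Fin r → ν
  msg : Fin r → M
  init : ∀ v, lab 0 v ∈ P.I
  step_br : ∀ i : Fin r, P.br (lab i.castSucc (sender i)) (msg i) (lab i.succ (sender i))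
  step_rcv : ∀ i : Fin r, ∀ v, v ≠ sender i →
    (edges i.castSucc (sender i) v → P.rcv (lab i.castSucc v) (msg i) (lab i.succ v)) ∧
    (¬ edges i.castSucc (sender i) v → lab i.succ v = lab i.castSucc v)

namespace RExec

variable {P : BroadcastProtocol Q M} {ν : Type} [Fintype ν] [DecidableEq ν] {r : ℕ}

/-- Labelling of the last configuration. -/
def lastLab (ρ : RExec P ν r) : ν → Q := ρ.lab (Fin.last r)

/-- The execution covers `F` if a node of the last configuration is labelled in `F`. -/
def Covers (ρ : RExec P ν r) (F : Set Q) : Prop := ∃ v, ρ.lastLab v ∈ F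

/-- The active length of node `v`: the number of steps in which `v` broadcasts. -/
def activeLen (ρ : RExec P ν r) (v : ν) : ℕ :=
  (Finset.univ.filter fun i : Fin r => ρ.sender i = v).card

end RExec

end Execs

/- ########## Auxiliary development ########## -/

section AuxDev
variable {Q M : Type} [Fintype Q] [DecidableEq Q] [Fintype M]

/-- Saturation: states coverable in the reconfigurable (equivalently lossy) semantics. -/
inductive Reach (P : BroadcastProtocol Q M) : Q → Prop
  | init {q} : q ∈ P.I → Reach P q
  | brd {q m q'} : Reach P q → P.br q m q' → Reach P q'
  | recv {q p m p' q'} : Reach P q → Reach P p → P.br p m p' → P.rcv q m q' → Reach P q'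

lemma RExec.reach {P : BroadcastProtocol Q M} {ν : Type} [Fintype ν] [DecidableEq ν] {r : ℕ}
    (ρ : RExec P ν r) : ∀ (i : Fin (r + 1)) (v : ν), Reach P (ρ.lab i v) := by
  intro i
  induction i using Fin.induction with
  | zero => intro v; exact .init (ρ.init v)
  | succ i ih =>
    intro v
    by_cases hv : v = ρ.sender i
    · subst hv; exact .brd (ih _) (ρ.step_br i)
    · by_cases he : ρ.edges i.castSucc (ρ.sender i) v
      · exact .recv (ih v) (ih _) (ρ.step_br i) ((ρ.step_rcv i v hv).1 he)
      · rw [(ρ.step_rcv i v hv).2 he]; exact ih v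

namespace LExec

variable {P : BroadcastProtocol Q M} {ν : Type} [Fintype ν] [DecidableEq ν] {r : ℕ}

/-- Appending one step to a lossy execution. -/
lemma exists_snoc (ρ : LExec P ν r) (s : ν) (m : M) (l : Bool) (f : ν → Q)
    (hbr : P.br (ρ.lastLab s) m (f s))
    (hlost : l = true → ∀ v, v ≠ s → f v = ρ.lastLab v)
    (hreal : l = false → ∀ v, v ≠ s →
      (ρ.E s v → P.rcv (ρ.lastLab v) m (f v)) ∧ (¬ ρ.E s v → f v = ρ.lastLab v)) :
    ∃ σ : LExec P ν (r + 1), σ.lastLab = f ∧ σ.E = ρ.E ∧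
      (∀ i : Fin r, σ.sender i.castSucc = ρ.sender i ∧ σ.lost i.castSucc = ρ.lost i) ∧
      σ.sender (Fin.last r) = s ∧ σ.lost (Fin.last r) = l := by
  refine ⟨{ lab := Fin.snoc ρ.lab f
            E := ρ.E
            E_symm := ρ.E_symm
            E_irrefl := ρ.E_irrefl
            sender := Fin.snoc ρ.sender s
            msg := Fin.snoc ρ.msg m
            lost := Fin.snoc ρ.lost l
            init := ?_, step_br := ?_, step_lost := ?_, step_real := ?_ },
          ?_, rfl, ?_, ?_, ?_⟩
  · intro v
    have h0 : (0 : Fin (r + 2)) = Fin.castSucc 0 := rfl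
    rw [h0, Fin.snoc_castSucc]; exact ρ.init v
  · intro i
    induction i using Fin.lastCases with
    | last =>
      simp only [Fin.snoc_last, Fin.succ_last, Fin.snoc_castSucc]
      exact hbr
    | cast j =>
      simp only [Fin.snoc_castSucc, Fin.succ_castSucc]
      exact ρ.step_br j
  · intro i hl v hv
    induction i using Fin.lastCases with
    | last =>
      simp only [Fin.snoc_last] at hl hv ⊢
      simp only [Fin.succ_last, Fin.snoc_last, Fin.snoc_castSucc]
      exact hlost hl v hv
    | cast j =>
      simp only [Fin.snoc_castSucc] at hl hv ⊢
      simp only [Fin.succ_castSucc, Fin.snoc_castSucc]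
      exact ρ.step_lost j hl v hv
  · intro i hl v hv
    induction i using Fin.lastCases with
    | last =>
      simp only [Fin.snoc_last] at hl hv ⊢
      simp only [Fin.succ_last, Fin.snoc_last, Fin.snoc_castSucc]
      exact hreal hl v hv
    | cast j =>
      simp only [Fin.snoc_castSucc] at hl hv ⊢
      simp only [Fin.succ_castSucc, Fin.snoc_castSucc]
      exact ρ.step_real j hl v hv
  · simp [LExec.lastLab]
  · intro i
    constructor
    · simp
    · simp
  · simp
  · simp

/-- Relabelling the nodes of a lossy execution along an equivalence. -/
lemma exists_relabel (ρ : LExec P ν r) {ν' : Type} [Fintype ν'] [DecidableEq ν']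
    (e : ν ≃ ν') :
    ∃ σ : LExec P ν' r, (∀ v, σ.lastLab (e v) = ρ.lastLab v) ∧
      (∀ i, σ.sender i = e (ρ.sender i) ∧ σ.lost i = ρ.lost i) := by
  refine ⟨{ lab := fun i v => ρ.lab i (e.symm v)
            E := fun v w => ρ.E (e.symm v) (e.symm w)
            E_symm := fun v w h => ρ.E_symm h
            E_irrefl := fun v h => ρ.E_irrefl _ h
            sender := fun i => e (ρ.sender i)
            msg := ρ.msg
            lost := ρ.lost
            init := fun v => ρ.init _
            step_br := ?_, step_lost := ?_, step_real := ?_ }, ?_, ?_⟩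
  · intro i; simpa using ρ.step_br i
  · intro i hl v hv
    exact ρ.step_lost i hl (e.symm v)
      (fun hc => hv (show v = e (ρ.sender i) by rw [← hc, e.apply_symm_apply]))
  · intro i hl v hv
    simpa using ρ.step_real i hl (e.symm v)
      (fun hc => hv (show v = e (ρ.sender i) by rw [← hc, e.apply_symm_apply]))
  · intro v; simp [lastLab]
  · intro i; exact ⟨rfl, rfl⟩

end LExec

/-- The cross topology on a sum: the two parts keep their topologies, plus one
edge between the designated nodes `a` and `b`. -/
def crossE {νA νB : Type} (EA : νA → νA → Prop) (EB : νB → νB → Prop) (a : νA) (b : νB) :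
    νA ⊕ νB → νA ⊕ νB → Prop
  | .inl v, .inl w => EA v w
  | .inr v, .inr w => EB v w
  | .inl v, .inr w => v = a ∧ w = b
  | .inr w, .inl v => v = a ∧ w = b

variable {P : BroadcastProtocol Q M}
variable {νA νB : Type} [Fintype νA] [DecidableEq νA] [Fintype νB] [DecidableEq νB]

/-- Running an execution on the left part of a sum, keeping the right part frozen. -/
lemma exists_sum_left (ρA : LExec P νA rA) (a : νA) (b : νB)
    (hA : ∀ i, ρA.sender i = a → ρA.lost i = true)
    (c : νB → Q) (hc : ∀ w, c w ∈ P.I)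
    (EB : νB → νB → Prop) (hsB : Symmetric EB) (hiB : Irreflexive EB) :
    ∃ σ : LExec P (νA ⊕ νB) rA, σ.E = crossE ρA.E EB a b ∧
      (∀ v, σ.lastLab (.inl v) = ρA.lastLab v) ∧
      (∀ w, σ.lastLab (.inr w) = c w) ∧
      (∀ i, σ.sender i = Sum.inl (ρA.sender i) ∧ σ.lost i = ρA.lost i) := by
  refine ⟨{ lab := fun i x => Sum.rec (ρA.lab i) c x
            E := crossE ρA.E EB a b
            E_symm := ?_
            E_irrefl := ?_
            sender := fun i => .inl (ρA.sender i)
            msg := ρA.msg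
            lost := ρA.lost
            init := ?_, step_br := ?_, step_lost := ?_, step_real := ?_ },
          rfl, fun v => rfl, fun w => rfl, fun i => ⟨rfl, rfl⟩⟩
  · rintro (v | v) (w | w) h
    · exact ρA.E_symm h
    · exact h
    · exact h
    · exact hsB h
  · rintro (v | v) h
    · exact ρA.E_irrefl _ h
    · exact hiB _ h
  · rintro (v | w)
    · exact ρA.init v
    · exact hc w
  · intro i; exact ρA.step_br i
  · intro i hl
    rintro (v | w) hv
    · exact ρA.step_lost i hl v (fun h => hv (by rw [h]))
    · rfl
  · intro i hl
    rintro (v | w) hv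
    · exact ρA.step_real i hl v (fun h => hv (by rw [h]))
    · constructor
      · rintro ⟨hsa, -⟩
        exact absurd (hA i hsa) (by simp [hl])
      · intro _; rfl

/-- Replaying an execution on the right part of a sum on top of an existing one. -/
lemma exists_sum_replay {rA rB : ℕ} (σ0 : LExec P (νA ⊕ νB) rA) (ρB : LExec P νB rB)
    (a : νA) (b : νB)
    (hB : ∀ i, ρB.sender i = b → ρB.lost i = true)
    (hE : σ0.E = crossE EA ρB.E a b)
    (hlr : ∀ w, σ0.lastLab (.inr w) = ρB.lab 0 w)
    (hs0 : ∀ i, (σ0.sender i = .inl a ∨ σ0.sender i = .inr b) → σ0.lost i = true) :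
    ∀ j, (hj : j ≤ rB) →
    ∃ σ : LExec P (νA ⊕ νB) (rA + j), σ.E = crossE EA ρB.E a b ∧
      (∀ v, σ.lastLab (.inl v) = σ0.lastLab (.inl v)) ∧
      (∀ w, σ.lastLab (.inr w) = ρB.lab ⟨j, Nat.lt_succ_of_le hj⟩ w) ∧
      (∀ i, (σ.sender i = .inl a ∨ σ.sender i = .inr b) → σ.lost i = true) := by
  intro j
  induction j with
  | zero =>
    intro hj
    exact ⟨σ0, hE, fun v => rfl, fun w => hlr w, hs0⟩
  | succ j ih =>
    intro hj
    have hj' : j < rB := hj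
    obtain ⟨σ, hEσ, hL, hR, hlost⟩ := ih (Nat.le_of_lt hj')
    set jf : Fin rB := ⟨j, hj'⟩ with hjf
    have hcast : (⟨j, Nat.lt_succ_of_le (Nat.le_of_lt hj')⟩ : Fin (rB + 1)) = jf.castSucc := rfl
    have hsucc : (⟨j + 1, Nat.lt_succ_of_le hj⟩ : Fin (rB + 1)) = jf.succ := rfl
    -- new labels
    set f : νA ⊕ νB → Q :=
      fun x => Sum.rec (fun v => σ.lastLab (.inl v)) (fun w => ρB.lab jf.succ w) x with hf
    have hbr' : P.br (σ.lastLab (.inr (ρB.sender jf))) (ρB.msg jf) (f (.inr (ρB.sender jf))) := by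
      show P.br (σ.lastLab (.inr (ρB.sender jf))) (ρB.msg jf) (ρB.lab jf.succ (ρB.sender jf))
      rw [hR, hcast]
      exact ρB.step_br jf
    have hlost' : ρB.lost jf = true → ∀ x, x ≠ Sum.inr (ρB.sender jf) →
        f x = σ.lastLab x := by
      intro hl
      rintro (v | w) hv
      · rfl
      · have hw : w ≠ ρB.sender jf := fun h => hv (by rw [h])
        show ρB.lab jf.succ w = σ.lastLab (.inr w)
        rw [hR, hcast, ρB.step_lost jf hl w hw]
    have hreal' : ρB.lost jf = false → ∀ x, x ≠ Sum.inr (ρB.sender jf) →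
        (σ.E (.inr (ρB.sender jf)) x → P.rcv (σ.lastLab x) (ρB.msg jf) (f x)) ∧
        (¬ σ.E (.inr (ρB.sender jf)) x → f x = σ.lastLab x) := by
      intro hl
      rintro (v | w) hv
      · -- a cross edge would force the sender to be `b`, contradicting `hl`
        constructor
        · intro he
          rw [hEσ] at he
          obtain ⟨-, hsb'⟩ := he
          exact absurd (hB jf hsb') (by simp [hl])
        · intro _; rfl
      · have hw : w ≠ ρB.sender jf := fun h => hv (by rw [h])
        have hrw := ρB.step_real jf hl w hw
        rw [hEσ]
        constructor
        · intro he
          show P.rcv (σ.lastLab (.inr w)) (ρB.msg jf) (ρB.lab jf.succ w)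
          rw [hR, hcast]
          exact hrw.1 he
        · intro he
          show ρB.lab jf.succ w = σ.lastLab (.inr w)
          rw [hR, hcast, hrw.2 he]
    obtain ⟨σ', h1, h2, h3, h4, h5⟩ := σ.exists_snoc (.inr (ρB.sender jf)) (ρB.msg jf)
      (ρB.lost jf) f hbr' hlost' hreal'
    refine ⟨σ', by rw [h2, hEσ], ?_, ?_, ?_⟩
    · intro v; rw [h1]; exact hL v
    · intro w
      rw [h1]
      show ρB.lab jf.succ w = ρB.lab ⟨j + 1, Nat.lt_succ_of_le hj⟩ w
      rw [hsucc]
    · intro i hi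
      induction i using Fin.lastCases with
      | last =>
        have hi' : σ'.sender (Fin.last (rA + j)) = Sum.inl a ∨
            σ'.sender (Fin.last (rA + j)) = Sum.inr b := hi
        rw [h4] at hi'
        show σ'.lost (Fin.last (rA + j)) = true
        rw [h5]
        rcases hi' with hi' | hi'
        · exact absurd hi' (by simp)
        · exact hB jf (by injection hi')
      | cast i =>
        have hi' : σ'.sender i.castSucc = Sum.inl a ∨ σ'.sender i.castSucc = Sum.inr b := hi
        rw [(h3 i).1] at hi'
        show σ'.lost i.castSucc = true
        rw [(h3 i).2]
        exact hlost i hi'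

/-- Realization: every saturation-reachable state is coverable by a lossy execution
in which, moreover, all broadcasts of the witnessing node are lost. -/
lemma Reach.realize {q : Q} (h : Reach P q) :
    ∃ (k r : ℕ) (ρ : LExec P (Fin k) r) (v : Fin k),
      ρ.lastLab v = q ∧ ∀ i, ρ.sender i = v → ρ.lost i = true := by
  induction h with
  | @init q hq =>
    refine ⟨1, 0, ⟨fun _ _ => q, fun _ _ => False, fun _ _ h => h.elim, fun _ h => h.elim,
      fun i => i.elim0, fun i => i.elim0, fun i => i.elim0, fun _ => hq,
      fun i => i.elim0, fun i => i.elim0, fun i => i.elim0⟩, 0, rfl, fun i => i.elim0⟩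
  | @brd q m q' _ hbr ih =>
    obtain ⟨k, r, ρ, v, hv, hl⟩ := ih
    obtain ⟨σ, h1, h2, h3, h4, h5⟩ := ρ.exists_snoc v m true (Function.update ρ.lastLab v q')
      (by rw [Function.update_self, hv]; exact hbr)
      (fun _ w hw => Function.update_of_ne hw _ _)
      (by simp)
    refine ⟨k, r + 1, σ, v, ?_, ?_⟩
    · rw [h1, Function.update_self]
    · intro i
      induction i using Fin.lastCases with
      | last => intro _; exact h5
      | cast i =>
        rw [(h3 i).1, (h3 i).2]
        exact hl i
  | @recv q p m p' q' _ _ hbr hrcv ihq ihp =>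
    classical
    obtain ⟨kA, rA, ρA, a, ha, hlA⟩ := ihq
    obtain ⟨kB, rB, ρB, b, hb, hlB⟩ := ihp
    -- phase 1: run A, with B's nodes frozen at their initial states
    obtain ⟨σ0, hE0, hL0, hR0, hS0⟩ := exists_sum_left ρA a b hlA
      (ρB.lab 0) (fun w => ρB.init w) ρB.E ρB.E_symm ρB.E_irrefl
    -- phase 2: replay B on the right
    obtain ⟨σ1, hE1, hL1, hR1, hS1⟩ := exists_sum_replay σ0 ρB a b hlB hE0 hR0
      (by
        intro i hi
        rw [(hS0 i).2]
        rcases hi with hi | hi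
        · rw [(hS0 i).1] at hi
          exact hlA i (by injection hi)
        · rw [(hS0 i).1] at hi; exact absurd hi (by simp)) rB le_rfl
    have hRlast : ∀ w, σ1.lastLab (.inr w) = ρB.lastLab w := by
      intro w; rw [hR1 w]; rfl
    -- final step: a real broadcast from `b`, received by `a`
    set f : Fin kA ⊕ Fin kB → Q := fun x =>
      Sum.rec (fun v => if v = a then q' else σ1.lastLab (.inl v))
        (fun w => if w = b then p'
          else if ρB.E b w then (P.complete (σ1.lastLab (.inr w)) m).choose
          else σ1.lastLab (.inr w)) x with hfdef
    obtain ⟨σ2, h1, h2, h3, h4, h5⟩ := σ1.exists_snoc (.inr b) m false f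
      (by
        show P.br (σ1.lastLab (.inr b)) m (f (.inr b))
        rw [hRlast b, hb]
        simpa [hfdef] using hbr)
      (by simp)
      (by
        intro _
        rintro (v | w) hv
        · constructor
          · intro he
            rw [hE1] at he
            obtain ⟨hva, -⟩ := he
            show P.rcv (σ1.lastLab (.inl v)) m (f (.inl v))
            rw [hva, hL1 a, hL0 a, ha]
            simpa [hfdef] using hrcv
          · intro he
            rw [hE1] at he
            have hva : v ≠ a := fun hv' => he ⟨hv', rfl⟩
            show f (.inl v) = σ1.lastLab (.inl v)
            simp [hfdef, hva]
        · have hwb : w ≠ b := fun h => hv (by rw [h])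
          constructor
          · intro he
            rw [hE1] at he
            show P.rcv (σ1.lastLab (.inr w)) m (f (.inr w))
            have hEbw : ρB.E b w := he
            simp only [hfdef, hwb, if_neg hwb, if_pos hEbw]
            exact (P.complete (σ1.lastLab (.inr w)) m).choose_spec
          · intro he
            rw [hE1] at he
            have hEbw : ¬ ρB.E b w := he
            show f (.inr w) = σ1.lastLab (.inr w)
            simp [hfdef, hwb, hEbw])
    -- transfer to `Fin (kA + kB)`
    obtain ⟨σ3, hrl, hrs⟩ := σ2.exists_relabel finSumFinEquiv
    refine ⟨kA + kB, rA + rB + 1, σ3, finSumFinEquiv (.inl a), ?_, ?_⟩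
    · rw [hrl, h1]
      simp [hfdef]
    · intro i hi
      rw [(hrs i).2]
      rw [(hrs i).1] at hi
      have hi' : σ2.sender i = .inl a := finSumFinEquiv.injective hi
      induction i using Fin.lastCases with
      | last =>
        rw [h4] at hi'
        exact absurd hi' (by simp)
      | cast i =>
        rw [(h3 i).2]
        rw [(h3 i).1] at hi'
        exact hS1 i (Or.inl hi')

/-- Every lossy execution gives a reconfigurable execution with the same labels. -/
lemma LExec.toRExec {ν : Type} [Fintype ν] [DecidableEq ν] {r : ℕ}
    (ρ : LExec P ν r) : ∃ σ : RExec P ν r, σ.lab = ρ.lab := by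
  refine ⟨{ lab := ρ.lab
            edges := fun j v w => ρ.E v w ∧ ∀ h : (j : ℕ) < r, ρ.lost ⟨j, h⟩ = false
            edges_symm := fun j v w h => ⟨ρ.E_symm h.1, h.2⟩
            edges_irrefl := fun j v h => ρ.E_irrefl v h.1
            sender := ρ.sender
            msg := ρ.msg
            init := ρ.init
            step_br := ρ.step_br
            step_rcv := ?_ }, rfl⟩
  intro i v hv
  have hmk : (⟨(i.castSucc : ℕ), by simpa using i.isLt⟩ : Fin r) = i := by
    ext; simp
  rcases hB : ρ.lost i with _ | _
  · have := ρ.step_real i hB v hv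
    constructor
    · intro he
      exact this.1 he.1
    · intro he
      by_cases hEv : ρ.E (ρ.sender i) v
      · exfalso
        exact he ⟨hEv, fun h => by rw [hmk]; exact hB⟩
      · exact this.2 hEv
  · constructor
    · rintro ⟨-, hfalse⟩
      have := hfalse (by simpa using i.isLt)
      rw [hmk, hB] at this
      exact absurd this (by simp)
    · intro _
      exact ρ.step_lost i hB v hv

end AuxDev

/-- **The reconfigurable and lossy semantics cover the same states:** a set `F` of
states of a broadcast protocol is coverable by a reconfigurable execution iff it is
coverable by a lossy execution. -/
theorem reconfigurable_cover_iff_lossy_cover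
    {Q M : Type} [Fintype Q] [DecidableEq Q] [Fintype M] (P : BroadcastProtocol Q M)
    (F : Set Q) :
    (∃ (k r : ℕ) (ρ : RExec P (Fin k) r), ρ.Covers F) ↔
    (∃ (k r : ℕ) (ρ : LExec P (Fin k) r), ρ.Covers F) := by
  constructor
  · rintro ⟨k, r, ρ, v, hv⟩
    obtain ⟨k', r', σ, w, hw, -⟩ := (ρ.reach (Fin.last r) v).realize
    exact ⟨k', r', σ, w, by rw [hw]; exact hv⟩
  · rintro ⟨k, r, ρ, v, hv⟩
    obtain ⟨σ, hσ⟩ := ρ.toRExec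
    exact ⟨k, r, σ, v, by
      show σ.lab (Fin.last r) v ∈ F
      rw [hσ]; exact hv⟩
end

section
/- Linear lower bound on the cutoff: for every n ≥ 1, there exists a reconfigurable execution of the broadcast protocol B_n covering {☺}, and every reconfigurable execution of B_n covering {☺} has at least n + 1 nodes. Since every lossy execution induces a reconfigurable one, every lossy execution of B_n covering {☺} also has at least n + 1 nodes. -/
/- ## The protocol B_n (linear cutoff / quadratic length lower bounds) -/

def BnBr (n : ℕ) : Fin (2 * n + 1) → (Fin n ⊕ Fin n) → Fin (2 * n + 1) → Prop
  | q, .inl i, q' => (q : ℕ) = 2 * (i : ℕ) ∧ (q' : ℕ) = 2 * (i : ℕ) + 1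
  | q, .inr i, q' => (q : ℕ) = 2 * (i : ℕ) + 1 ∧ q' = q

def BnRcvF (n : ℕ) (q : Fin (2 * n + 1)) (m : Fin n ⊕ Fin n) : Fin (2 * n + 1) :=
  match m with
  | .inl _ => q
  | .inr i =>
      if (q : ℕ) = 2 * (i : ℕ) + 1 then ⟨2 * (i : ℕ) + 2, by have := i.isLt; omega⟩ else q

def Bn (n : ℕ) : BroadcastProtocol (Fin (2 * n + 1)) (Fin n ⊕ Fin n) where
  I := {0}
  br := BnBr n
  rcv := fun q m q' => q' = BnRcvF n q m
  complete := fun q m => ⟨BnRcvF n q m, rfl⟩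

def BnSmiley (n : ℕ) : Fin (2 * n + 1) := ⟨2 * n, by omega⟩

section AuxSnoc
variable {Q M : Type} [Fintype Q] [DecidableEq Q] [Fintype M]
variable {P : BroadcastProtocol Q M} {ν : Type} [Fintype ν] [DecidableEq ν] {r : ℕ}

theorem rexec_snoc (ρ : RExec P ν r) (v : ν) (m : M) (E' : ν → ν → Prop)
    (hsymm : Symmetric E') (hirr : Irreflexive E') (L' : ν → Q)
    (hbr : P.br (ρ.lastLab v) m (L' v))
    (hrcv : ∀ w, w ≠ v →
      (E' v w → P.rcv (ρ.lastLab w) m (L' w)) ∧ (¬ E' v w → L' w = ρ.lastLab w)) :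
    ∃ ρ' : RExec P ν (r + 1), ρ'.lastLab = L' := by
  refine ⟨⟨fun i => if h : (i : ℕ) < r + 1 then ρ.lab ⟨i, h⟩ else L',
          fun i => if h : (i : ℕ) < r then ρ.edges ⟨i, Nat.lt_succ_of_lt h⟩ else E',
          ?_, ?_,
          fun i => if h : (i : ℕ) < r then ρ.sender ⟨i, h⟩ else v,
          fun i => if h : (i : ℕ) < r then ρ.msg ⟨i, h⟩ else m,
          ?_, ?_, ?_⟩, ?_⟩
  · intro i
    split
    · exact ρ.edges_symm _
    · exact hsymm
  · intro i
    split
    · exact ρ.edges_irrefl _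
    · exact hirr
  · intro w
    have h0 : ((0 : Fin (r + 1 + 1)) : ℕ) < r + 1 := by simp
    simpa [h0] using ρ.init w
  · intro i
    dsimp only [Fin.coe_castSucc, Fin.val_succ]
    by_cases h : (i : ℕ) < r
    · rw [dif_pos h, dif_pos h, dif_pos (by omega : (i : ℕ) < r + 1),
        dif_pos (by omega : (i : ℕ) + 1 < r + 1)]
      exact ρ.step_br ⟨i, h⟩
    · have hi : (i : ℕ) = r := by omega
      rw [dif_neg h, dif_neg h, dif_pos (by omega : (i : ℕ) < r + 1),
        dif_neg (by omega : ¬ (i : ℕ) + 1 < r + 1)]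
      have : (⟨(i : ℕ), by omega⟩ : Fin (r + 1)) = Fin.last r := Fin.ext (by simpa using hi)
      rw [this]
      exact hbr
  · intro i w hw
    dsimp only [Fin.coe_castSucc, Fin.val_succ]
    by_cases h : (i : ℕ) < r
    · rw [dif_pos h, dif_pos h, dif_pos h, dif_pos (by omega : (i : ℕ) < r + 1),
        dif_pos (by omega : (i : ℕ) + 1 < r + 1)]
      have := ρ.step_rcv ⟨i, h⟩ w (by simp [h] at hw; exact hw)
      exact this
    · have hi : (i : ℕ) = r := by omega
      rw [dif_neg h, dif_neg h, dif_neg h, dif_pos (by omega : (i : ℕ) < r + 1),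
        dif_neg (by omega : ¬ (i : ℕ) + 1 < r + 1)]
      have hlast : (⟨(i : ℕ), by omega⟩ : Fin (r + 1)) = Fin.last r := Fin.ext (by simpa using hi)
      rw [hlast]
      exact hrcv w (by simp [h] at hw; exact hw)
  · funext w
    have : ¬ ((Fin.last (r + 1) : Fin (r + 1 + 1)) : ℕ) < r + 1 := by simp
    simp [RExec.lastLab, this]

theorem rexec_nil (q0 : Q) (hq0 : q0 ∈ P.I) :
    ∃ ρ : RExec P ν 0, ρ.lastLab = fun _ => q0 := by
  refine ⟨⟨fun _ _ => q0, fun _ _ _ => False, fun _ => by intro a b h; exact h,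
    fun _ _ h => h, Fin.elim0, Fin.elim0, fun _ => hq0, fun i => i.elim0, fun i => i.elim0⟩, rfl⟩

end AuxSnoc
def BnReach (n : ℕ) (L : Fin (n + 1) → Fin (2 * n + 1)) : Prop :=
  ∃ (r : ℕ) (ρ : RExec (Bn n) (Fin (n + 1)) r), ρ.lastLab = L

theorem bnReach_init (n : ℕ) : BnReach n fun _ => 0 :=
  ⟨0, rexec_nil 0 (by simp [Bn])⟩

theorem bnReach_step (n : ℕ) (L : Fin (n + 1) → Fin (2 * n + 1)) (hL : BnReach n L)
    (v : Fin (n + 1)) (m : Fin n ⊕ Fin n) (q' : Fin (2 * n + 1))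
    (hbr : BnBr n (L v) m q') (S : Finset (Fin (n + 1))) (hv : v ∉ S) :
    BnReach n fun w => if w = v then q' else if w ∈ S then BnRcvF n (L w) m else L w := by
  obtain ⟨r, ρ, hρ⟩ := hL
  obtain ⟨ρ', hρ'⟩ := rexec_snoc ρ v m (fun a b => (a = v ∧ b ∈ S) ∨ (b = v ∧ a ∈ S))
    (fun a b h => h.elim (fun h => Or.inr h) fun h => Or.inl h)
    (fun a h => by
      rcases h with ⟨rfl, h2⟩ | ⟨rfl, h2⟩ <;> exact hv h2)
    (fun w => if w = v then q' else if w ∈ S then BnRcvF n (L w) m else L w)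
    (by rw [hρ]; simpa [Bn] using hbr)
    (by
      intro w hw
      rw [hρ]
      constructor
      · intro hE
        have hwS : w ∈ S := by
          rcases hE with ⟨h1, h2⟩ | ⟨h1, h2⟩
          · exact h2
          · exact absurd h1 hw
        simp [Bn, hw, hwS]
      · intro hE
        have hwS : w ∉ S := fun hs => hE (Or.inl ⟨rfl, hs⟩)
        simp [hw, hwS])
  exact ⟨r + 1, ρ', hρ'⟩
theorem bnReach_inner (n k : ℕ) (hk : k < n) (m : ℕ) (hm : m ≤ n - k + 1)
    (base : BnReach n fun j => ⟨if (j : ℕ) ≤ n - k then 2 * k else 2 * (n - (j : ℕ)) + 1,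
      by have hj := j.isLt; split <;> omega⟩) :
    BnReach n fun j => ⟨if (j : ℕ) < m then 2 * k + 1
        else if (j : ℕ) ≤ n - k then 2 * k else 2 * (n - (j : ℕ)) + 1,
      by have hj := j.isLt; split_ifs <;> omega⟩ := by
  induction m with
  | zero =>
    convert base using 2 with j
    simp
  | succ m ih =>
    have hm' : m ≤ n - k := by omega
    have ihm := ih (by omega) base
    have hstep := bnReach_step n _ ihm ⟨m, by omega⟩ (Sum.inl ⟨k, hk⟩)
      ⟨2 * k + 1, by omega⟩
      (by
        refine ⟨?_, ?_⟩
        · show (if (m : ℕ) < m then 2 * k + 1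
            else if (m : ℕ) ≤ n - k then 2 * k else 2 * (n - m) + 1) = 2 * k
          rw [if_neg (by omega), if_pos hm']
        · rfl)
      ∅ (Finset.notMem_empty _)
    convert hstep using 1
    funext w
    simp only [Finset.notMem_empty, if_false]
    by_cases hw : w = (⟨m, by omega⟩ : Fin (n + 1))
    · rw [if_pos hw]
      have hwm : (w : ℕ) = m := by rw [hw]
      apply Fin.ext
      show (if (w : ℕ) < m + 1 then 2 * k + 1 else _) = 2 * k + 1
      rw [if_pos (by omega)]
    · rw [if_neg hw]
      have hwm : (w : ℕ) ≠ m := fun h => hw (Fin.ext h)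
      apply Fin.ext
      show (if (w : ℕ) < m + 1 then _ else _) = (if (w : ℕ) < m then _ else _)
      by_cases h2 : (w : ℕ) < m
      · rw [if_pos (by omega), if_pos h2]
      · rw [if_neg (by omega), if_neg h2]

theorem bnReach_outer (n k : ℕ) (hk : k ≤ n) :
    BnReach n fun j => ⟨if (j : ℕ) ≤ n - k then 2 * k else 2 * (n - (j : ℕ)) + 1,
      by have hj := j.isLt; split <;> omega⟩ := by
  induction k with
  | zero =>
    have h0 := bnReach_init n
    convert h0 using 2 with j
    have hj := j.isLt
    apply Fin.ext
    show (if (j : ℕ) ≤ n - 0 then 2 * 0 else 2 * (n - (j : ℕ)) + 1) = 0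
    rw [if_pos (by omega)]
  | succ k ih =>
    have hk' : k < n := by omega
    have hinner := bnReach_inner n k hk' (n - k + 1) le_rfl (ih (by omega))
    classical
    have hstep := bnReach_step n _ hinner ⟨n - k, by omega⟩ (Sum.inr ⟨k, hk'⟩)
      ⟨2 * k + 1, by omega⟩
      (by
        refine ⟨?_, ?_⟩
        · show (if (n - k : ℕ) < n - k + 1 then 2 * k + 1 else _) = 2 * k + 1
          rw [if_pos (by omega)]
        · apply Fin.ext
          show 2 * k + 1 = (if (n - k : ℕ) < n - k + 1 then 2 * k + 1 else _)
          rw [if_pos (by omega)])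
      (Finset.univ.filter fun w => (w : ℕ) < n - k)
      (by simp)
    convert hstep using 1
    funext w
    simp only [Finset.mem_filter, Finset.mem_univ, true_and]
    by_cases hw : w = (⟨n - k, by omega⟩ : Fin (n + 1))
    · rw [if_pos hw]
      have hwm : (w : ℕ) = n - k := by rw [hw]
      apply Fin.ext
      show (if (w : ℕ) ≤ n - (k + 1) then 2 * (k + 1) else 2 * (n - (w : ℕ)) + 1) = 2 * k + 1
      rw [if_neg (by omega)]
      omega
    · rw [if_neg hw]
      have hwm : (w : ℕ) ≠ n - k := fun h => hw (Fin.ext h)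
      by_cases hS : (w : ℕ) < n - k
      · rw [if_pos hS]
        have hLw : (if (w : ℕ) < n - k + 1 then 2 * k + 1
            else if (w : ℕ) ≤ n - k then 2 * k else 2 * (n - (w : ℕ)) + 1) = 2 * k + 1 :=
          if_pos (by omega)
        apply Fin.ext
        show (if (w : ℕ) ≤ n - (k + 1) then 2 * (k + 1) else 2 * (n - (w : ℕ)) + 1)
          = ((BnRcvF n _ (Sum.inr ⟨k, hk'⟩) : Fin (2 * n + 1)) : ℕ)
        rw [if_pos (by omega)]
        simp only [BnRcvF]
        rw [if_pos (by exact hLw)]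
        show 2 * (k + 1) = 2 * k + 2
        omega
      · rw [if_neg hS]
        apply Fin.ext
        show (if (w : ℕ) ≤ n - (k + 1) then 2 * (k + 1) else 2 * (n - (w : ℕ)) + 1)
          = (if (w : ℕ) < n - k + 1 then 2 * k + 1
            else if (w : ℕ) ≤ n - k then 2 * k else 2 * (n - (w : ℕ)) + 1)
        rw [if_neg (by omega), if_neg (by omega), if_neg (by omega)]

theorem bn_exists_cover (n : ℕ) (hn : 1 ≤ n) :
    ∃ (k r : ℕ) (ρ : RExec (Bn n) (Fin k) r), ρ.Covers {BnSmiley n} := by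
  obtain ⟨r, ρ, hρ⟩ := bnReach_outer n n le_rfl
  refine ⟨n + 1, r, ρ, ⟨0, ?_⟩⟩
  rw [hρ]
  simp only [Set.mem_singleton_iff]
  apply Fin.ext
  show (if ((0 : Fin (n + 1)) : ℕ) ≤ n - n then 2 * n else 2 * (n - ((0 : Fin (n + 1)) : ℕ)) + 1) = 2 * n
  rw [if_pos (by simp)]
section LowerBound
variable {n : ℕ} {ν : Type} [Fintype ν] [DecidableEq ν] {r : ℕ}

theorem bn_step_cases (ρ : RExec (Bn n) ν r) (s : Fin r) (v : ν) :
    ρ.lab s.succ v = ρ.lab s.castSucc v ∨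
    (v = ρ.sender s ∧ ∃ j : Fin n,
      (ρ.lab s.castSucc v : ℕ) = 2 * j ∧ (ρ.lab s.succ v : ℕ) = 2 * j + 1) ∨
    (v ≠ ρ.sender s ∧ ∃ j : Fin n,
      (ρ.lab s.castSucc v : ℕ) = 2 * j + 1 ∧ (ρ.lab s.succ v : ℕ) = 2 * j + 2 ∧
      (ρ.lab s.castSucc (ρ.sender s) : ℕ) = 2 * j + 1 ∧
      (ρ.lab s.succ (ρ.sender s) : ℕ) = 2 * j + 1) := by
  classical
  have hbr : BnBr n (ρ.lab s.castSucc (ρ.sender s)) (ρ.msg s) (ρ.lab s.succ (ρ.sender s)) :=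
    ρ.step_br s
  by_cases hv : v = ρ.sender s
  · rcases hmsg : ρ.msg s with j | j <;> rw [hmsg] at hbr
    · obtain ⟨h1, h2⟩ := hbr
      refine Or.inr (Or.inl ⟨hv, j, ?_, ?_⟩) <;> rw [hv] <;> assumption
    · obtain ⟨h1, h2⟩ := hbr
      refine Or.inl ?_
      rw [hv, h2]
  · obtain ⟨h1, h2⟩ := ρ.step_rcv s v hv
    by_cases hE : ρ.edges s.castSucc (ρ.sender s) v
    · have h3 : ρ.lab s.succ v = BnRcvF n (ρ.lab s.castSucc v) (ρ.msg s) := h1 hE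
      rcases hmsg : ρ.msg s with j | j <;> rw [hmsg] at h3 hbr
      · exact Or.inl h3
      · by_cases hc : (ρ.lab s.castSucc v : ℕ) = 2 * (j : ℕ) + 1
        · obtain ⟨hb1, hb2⟩ := hbr
          refine Or.inr (Or.inr ⟨hv, j, hc, ?_, hb1, ?_⟩)
          · rw [h3]
            simp only [BnRcvF]
            rw [if_pos hc]
          · rw [hb2]; exact hb1
        · refine Or.inl ?_
          rw [h3]
          simp only [BnRcvF]
          rw [if_neg hc]
    · exact Or.inl (h2 hE)

theorem bn_step_mono (ρ : RExec (Bn n) ν r) (s : Fin r) (v : ν) :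
    (ρ.lab s.castSucc v : ℕ) ≤ (ρ.lab s.succ v : ℕ) := by
  rcases bn_step_cases ρ s v with h | ⟨_, j, h1, h2⟩ | ⟨_, j, h1, h2, _⟩ <;>
    first | (rw [h]) | omega

theorem bn_mono_aux (ρ : RExec (Bn n) ν r) (v : ν) :
    ∀ (b : ℕ) (hb : b < r + 1) (a : ℕ) (ha : a < r + 1), a ≤ b →
      (ρ.lab ⟨a, ha⟩ v : ℕ) ≤ (ρ.lab ⟨b, hb⟩ v : ℕ) := by
  intro b
  induction b with
  | zero =>
    intro hb a ha hab
    have : a = 0 := by omega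
    subst this
    exact le_refl _
  | succ b ih =>
    intro hb a ha hab
    by_cases hab' : a = b + 1
    · subst hab'; exact le_refl _
    · have h1 := ih (by omega) a ha (by omega)
      have h2 := bn_step_mono ρ ⟨b, by omega⟩ v
      exact le_trans h1 h2

theorem bn_mono (ρ : RExec (Bn n) ν r) (v : ν) (t t' : Fin (r + 1)) (h : t ≤ t') :
    (ρ.lab t v : ℕ) ≤ (ρ.lab t' v : ℕ) := by
  have := bn_mono_aux ρ v t' t'.isLt t t.isLt h
  simpa using this

theorem bn_ivt (ρ : RExec (Bn n) ν r) (v : ν) (c : ℕ) (t t' : Fin (r + 1))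
    (h1 : (ρ.lab t v : ℕ) < c) (h2 : c ≤ (ρ.lab t' v : ℕ)) :
    ∃ s : Fin r, t ≤ s.castSucc ∧ (ρ.lab s.castSucc v : ℕ) < c ∧
      c ≤ (ρ.lab s.succ v : ℕ) := by
  classical
  set S : Finset (Fin (r + 1)) :=
    Finset.univ.filter (fun u => t ≤ u ∧ c ≤ (ρ.lab u v : ℕ)) with hS
  have htt' : t ≤ t' := by
    by_contra hc
    push_neg at hc
    exact absurd (le_trans h2 (bn_mono ρ v t' t (le_of_lt hc))) (by omega)
  have hne : S.Nonempty := ⟨t', by simp [hS, htt', h2]⟩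
  set u0 := S.min' hne with hu0
  have hu0S : u0 ∈ S := S.min'_mem hne
  simp only [hS, Finset.mem_filter, Finset.mem_univ, true_and] at hu0S
  obtain ⟨htu0, hcu0⟩ := hu0S
  have hne0 : t ≠ u0 := fun h => by rw [← h] at hcu0; omega
  have htlt : (t : ℕ) < (u0 : ℕ) := by
    rcases lt_or_eq_of_le htu0 with h | h
    · exact h
    · exact absurd h hne0
  have hu0pos : 1 ≤ (u0 : ℕ) := by omega
  refine ⟨⟨(u0 : ℕ) - 1, by have := u0.isLt; omega⟩, ?_, ?_, ?_⟩
  · show (t : ℕ) ≤ (u0 : ℕ) - 1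
    omega
  · by_contra hc
    push_neg at hc
    have hmem : (⟨(u0 : ℕ) - 1, by have := u0.isLt; omega⟩ : Fin (r + 1)) ∈ S := by
      simp only [hS, Finset.mem_filter, Finset.mem_univ, true_and]
      exact ⟨by show (t : ℕ) ≤ (u0 : ℕ) - 1; omega, hc⟩
    have h5 : u0 ≤ (⟨(u0 : ℕ) - 1, by have := u0.isLt; omega⟩ : Fin (r + 1)) :=
      S.min'_le _ hmem
    have h6 : (u0 : ℕ) ≤ (u0 : ℕ) - 1 := h5
    omega
  · have : (Fin.succ (⟨(u0 : ℕ) - 1, by have := u0.isLt; omega⟩ : Fin r)) = u0 :=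
      Fin.ext (by show (u0 : ℕ) - 1 + 1 = u0; omega)
    rw [this]
    exact hcu0

theorem bn_lab_zero (ρ : RExec (Bn n) ν r) (v : ν) : (ρ.lab 0 v : ℕ) = 0 := by
  have := ρ.init v
  simp only [Bn, Finset.mem_singleton] at this
  rw [this]
  rfl

/-- If `v` reaches level at least `2k+2` at time `t'`, there is a crossing step `s`
whose sender is at level exactly `2k+1` both before and after `s`. -/
theorem bn_crossing (ρ : RExec (Bn n) ν r) (k : ℕ) (v : ν) (t' : Fin (r + 1))
    (h2 : 2 * k + 2 ≤ (ρ.lab t' v : ℕ)) (hk : k < n) :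
    ∃ s : Fin r, (ρ.lab s.castSucc v : ℕ) < 2 * k + 2 ∧
      2 * k + 2 ≤ (ρ.lab s.succ v : ℕ) ∧
      (ρ.lab s.castSucc (ρ.sender s) : ℕ) = 2 * k + 1 ∧
      (ρ.lab s.succ (ρ.sender s) : ℕ) = 2 * k + 1 := by
  obtain ⟨s, _, hlt, hge⟩ := bn_ivt ρ v (2 * k + 2) 0 t' (by rw [bn_lab_zero]; omega) h2
  refine ⟨s, hlt, hge, ?_, ?_⟩ <;>
  · rcases bn_step_cases ρ s v with h | ⟨_, j, h1, hj2⟩ | ⟨_, j, h1, hj2, hj3, hj4⟩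
    · rw [h] at hge; omega
    · omega
    · have : (j : ℕ) = k := by omega
      omega

end LowerBound
theorem bn_lower (n : ℕ) (hn : 1 ≤ n) (ν : Type) [Fintype ν] [DecidableEq ν] (r : ℕ)
    (ρ : RExec (Bn n) ν r) (h : ρ.Covers {BnSmiley n}) : n + 1 ≤ Fintype.card ν := by
  classical
  obtain ⟨v0, hv0⟩ := h
  have hv0' : (ρ.lab (Fin.last r) v0 : ℕ) = 2 * n := by
    have h1 : ρ.lastLab v0 = BnSmiley n := hv0
    rw [RExec.lastLab] at h1
    rw [h1]
    rfl
  set U : ℕ → Finset ν :=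
    fun k => Finset.univ.filter (fun v => ∃ t, 2 * k ≤ (ρ.lab t v : ℕ)) with hU
  have hv0U : ∀ k, k ≤ n → v0 ∈ U k := by
    intro k hk
    simp only [hU, Finset.mem_filter, Finset.mem_univ, true_and]
    exact ⟨Fin.last r, by omega⟩
  have hsub : ∀ k, U (k + 1) ⊆ U k := by
    intro k v hv
    simp only [hU, Finset.mem_filter, Finset.mem_univ, true_and] at hv ⊢
    obtain ⟨t, ht⟩ := hv
    exact ⟨t, by omega⟩
  have hstep : ∀ k, k < n → (U (k + 1)).card + 1 ≤ (U k).card := by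
    intro k hk
    set C : Finset (Fin r) := Finset.univ.filter
      (fun s => ∃ w, (ρ.lab s.castSucc w : ℕ) < 2 * k + 2 ∧
        2 * k + 2 ≤ (ρ.lab s.succ w : ℕ)) with hC
    have hCne : C.Nonempty := by
      obtain ⟨s, h1, h2, _, _⟩ := bn_crossing ρ k v0 (Fin.last r) (by omega) hk
      refine ⟨s, ?_⟩
      simp only [hC, Finset.mem_filter, Finset.mem_univ, true_and]
      exact ⟨v0, h1, h2⟩
    set s0 := C.max' hCne with hs0
    have hs0C : s0 ∈ C := C.max'_mem hCne
    simp only [hC, Finset.mem_filter, Finset.mem_univ, true_and] at hs0C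
    obtain ⟨w, hw1, hw2⟩ := hs0C
    have hsender : (ρ.lab s0.castSucc (ρ.sender s0) : ℕ) = 2 * k + 1 ∧
        (ρ.lab s0.succ (ρ.sender s0) : ℕ) = 2 * k + 1 := by
      rcases bn_step_cases ρ s0 w with h | ⟨_, j, h1, h2⟩ | ⟨_, j, h1, h2, h3, h4⟩
      · rw [h] at hw2; omega
      · omega
      · have hj : (j : ℕ) = k := by omega
        constructor <;> omega
    have hsU : ρ.sender s0 ∈ U k := by
      simp only [hU, Finset.mem_filter, Finset.mem_univ, true_and]
      exact ⟨s0.castSucc, by omega⟩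
    have hsnotU : ρ.sender s0 ∉ U (k + 1) := by
      intro hmem
      simp only [hU, Finset.mem_filter, Finset.mem_univ, true_and] at hmem
      obtain ⟨t', ht'⟩ := hmem
      rcases le_total t' s0.succ with hle | hle
      · have := bn_mono ρ (ρ.sender s0) t' s0.succ hle
        omega
      · obtain ⟨s, hsge, hlt, hge⟩ := bn_ivt ρ (ρ.sender s0) (2 * k + 2) s0.succ t'
          (by omega) (by omega)
        have hsC : s ∈ C := by
          simp only [hC, Finset.mem_filter, Finset.mem_univ, true_and]
          exact ⟨ρ.sender s0, hlt, hge⟩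
        have hle2 : s ≤ s0 := C.le_max' s hsC
        have hv1 : (s0 : ℕ) + 1 ≤ (s : ℕ) := hsge
        have hv2 : (s : ℕ) ≤ (s0 : ℕ) := hle2
        omega
    exact Finset.card_lt_card
      ((Finset.ssubset_iff_of_subset (hsub k)).mpr ⟨_, hsU, hsnotU⟩)
  have chain : ∀ k, k ≤ n → k + (U n).card ≤ (U (n - k)).card := by
    intro k
    induction k with
    | zero => intro _; simp
    | succ k ih =>
      intro hk1
      have h1 := hstep (n - (k + 1)) (by omega)
      have h2 : n - (k + 1) + 1 = n - k := by omega
      rw [h2] at h1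
      have h3 := ih (by omega)
      omega
  have hUn : 1 ≤ (U n).card := Finset.card_pos.mpr ⟨v0, hv0U n le_rfl⟩
  have hch := chain n le_rfl
  rw [Nat.sub_self] at hch
  have hle : (U 0).card ≤ Fintype.card ν := by
    rw [← Finset.card_univ]
    exact Finset.card_le_card (Finset.filter_subset _ _)
  omega

theorem lexec_to_rexec {Q M : Type} [Fintype Q] [DecidableEq Q] [Fintype M]
    {P : BroadcastProtocol Q M} {ν : Type} [Fintype ν] [DecidableEq ν] {r : ℕ}
    (ρ : LExec P ν r) : ∃ ρ' : RExec P ν r, ρ'.lastLab = ρ.lastLab := by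
  refine ⟨⟨ρ.lab,
    fun i a b => ρ.E a b ∧ ∃ h : (i : ℕ) < r, ρ.lost ⟨i, h⟩ = false,
    fun i a b hab => ⟨ρ.E_symm hab.1, hab.2⟩,
    fun i a hab => ρ.E_irrefl a hab.1,
    ρ.sender, ρ.msg, ρ.init, ρ.step_br, ?_⟩, rfl⟩
  intro i v hv
  have hval : ((i.castSucc : Fin (r + 1)) : ℕ) = (i : ℕ) := rfl
  constructor
  · rintro ⟨hE, h, hl⟩
    have hi : (⟨((i.castSucc : Fin (r + 1)) : ℕ), h⟩ : Fin r) = i := Fin.ext rfl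
    rw [hi] at hl
    exact (ρ.step_real i hl v hv).1 hE
  · intro hne
    rcases hl : ρ.lost i with hfalse | htrue
    · by_cases hE : ρ.E (ρ.sender i) v
      · exact absurd ⟨hE, i.isLt, by rw [show (⟨((i.castSucc : Fin (r+1)) : ℕ), i.isLt⟩ : Fin r) = i from Fin.ext rfl]; exact hl⟩ hne
      · exact (ρ.step_real i hl v hv).2 hE
    · exact ρ.step_lost i hl v hv

/-- **Linear lower bound on the cutoff.** For every `n ≥ 1`, some reconfigurable
execution of `B_n` covers `{☺}`, every reconfigurable execution of `B_n` covering
`{☺}` has at least `n + 1` nodes, and (since every lossy execution induces a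
reconfigurable one) every lossy execution of `B_n` covering `{☺}` also has at least
`n + 1` nodes. -/
theorem cutoff_linear_lower_bound (n : ℕ) (hn : 1 ≤ n) :
    (∃ (k r : ℕ) (ρ : RExec (Bn n) (Fin k) r), ρ.Covers {BnSmiley n}) ∧
    (∀ (ν : Type) [Fintype ν] [DecidableEq ν] (r : ℕ) (ρ : RExec (Bn n) ν r),
      ρ.Covers {BnSmiley n} → n + 1 ≤ Fintype.card ν) ∧
    (∀ (ν : Type) [Fintype ν] [DecidableEq ν] (r : ℕ) (ρ : LExec (Bn n) ν r),
      ρ.Covers {BnSmiley n} → n + 1 ≤ Fintype.card ν) := by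

  refine ⟨bn_exists_cover n hn, fun ν _ _ r ρ h => bn_lower n hn ν r ρ h, ?_⟩
  intro ν _ _ r ρ h
  obtain ⟨ρ', hρ'⟩ := lexec_to_rexec ρ
  apply bn_lower n hn ν r ρ'
  obtain ⟨v, hv⟩ := h
  exact ⟨v, by rw [hρ']; exact hv⟩
end
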